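/- For every natural number n, the set of additive subgroups Δ of ℝ satisfying c(ℤ, Δ) ≤ n is finite, where ℤ denotes the additive subgroup of ℝ generated by 1. -/

import Mathlib

/-- The commensurability index of two additive subgroups `A`, `B`:
`c(A,B) = [A : A ⊓ B] * [B : A ⊓ B]`. Following Mathlib's convention for
`AddSubgroup.relindex`, a value of `0` means the index is infinite. -/
noncomputable def addCommIndex {G : Type*} [AddGroup G] (A B : AddSubgroup G) : ℕ :=
  (A ⊓ B).relIndex A * (A ⊓ B).relIndex B


open AddSubgroup

lemma keyA {S T : AddSubgroup ℝ} (h : S ≤ T) {t : ℝ} (ht : t ∈ T) :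
    S.relIndex T • t ∈ S := by
  have := (S.addSubgroupOf T).nsmul_index_mem (⟨t, ht⟩ : T)
  rw [mem_addSubgroupOf] at this
  simpa [relIndex] using this

lemma keyB (x : ℝ) (hx : x ≠ 0) (k : ℕ) :
    (zmultiples ((k : ℝ) * x)).relIndex (zmultiples x) = k := by
  have hmap : AddSubgroup.map (zmultiplesHom ℝ x) ⊤ = zmultiples x := by
    rw [← range_zmultiplesHom x, AddMonoidHom.range_eq_map]
  have hcomap : AddSubgroup.comap (zmultiplesHom ℝ x) (zmultiples ((k : ℝ) * x))
      = zmultiples (k : ℤ) := by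
    ext m
    simp only [mem_comap, zmultiplesHom_apply, mem_zmultiples_iff, zsmul_eq_mul]
    constructor
    · rintro ⟨j, hj⟩
      refine ⟨j, ?_⟩
      have h2 : ((j * k : ℤ) : ℝ) = (m : ℝ) :=
        mul_right_cancel₀ hx (by push_cast; linear_combination hj)
      exact_mod_cast h2
    · rintro ⟨j, hj⟩
      refine ⟨j, ?_⟩
      have : (m : ℝ) = (j : ℝ) * k := by exact_mod_cast hj.symm
      rw [this]; ring
  rw [← hmap, ← relIndex_comap, hcomap, relIndex_top_right, Int.index_zmultiples,
    Int.natAbs_natCast]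

lemma keyC (Δ : AddSubgroup ℝ) {a b : ℕ}
    (ha : (zmultiples (1:ℝ) ⊓ Δ).relIndex (zmultiples (1:ℝ)) = a)
    (hb : (zmultiples (1:ℝ) ⊓ Δ).relIndex Δ = b)
    (ha0 : a ≠ 0) (hb0 : b ≠ 0) :
    Δ = zmultiples ((a : ℝ) / b) := by
  set Z := zmultiples (1:ℝ) with hZ
  set S := Z ⊓ Δ with hSdef
  have haR : ((a:ℝ)) ≠ 0 := Nat.cast_ne_zero.mpr ha0
  have hbR : ((b:ℝ)) ≠ 0 := Nat.cast_ne_zero.mpr hb0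
  -- index of aℤ in ℤ is a
  have hza : (zmultiples ((a:ℝ))).relIndex Z = a := by
    have := keyB 1 one_ne_zero a
    simpa using this
  -- aℤ ≤ S
  have hle : zmultiples ((a:ℝ)) ≤ S := by
    apply zmultiples_le_of_mem
    have h1 : (1:ℝ) ∈ Z := mem_zmultiples 1
    have := keyA (inf_le_left : S ≤ Z) h1
    rw [ha] at this
    simpa [hSdef] using this
  -- S = aℤ
  have hSeq : S = zmultiples ((a:ℝ)) := by
    have hmul := relIndex_mul_relIndex _ _ _ hle (inf_le_left : S ≤ Z)
    rw [ha, hza] at hmul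
    have h1 : (zmultiples ((a:ℝ))).relIndex S * a = 1 * a := by rw [one_mul]; exact hmul
    have := mul_right_cancel₀ ha0 h1
    exact le_antisymm (relIndex_eq_one.mp this) hle
  -- Δ ≤ zmultiples (a/b)
  set T := zmultiples ((a:ℝ)/b) with hT
  have hDT : Δ ≤ T := by
    intro x hx
    have hb' := keyA (inf_le_right : S ≤ Δ) hx
    rw [hb, show (Z ⊓ Δ : AddSubgroup ℝ) = zmultiples ((a:ℝ)) from hSeq] at hb'
    rcases mem_zmultiples_iff.mp hb' with ⟨j, hj⟩
    refine mem_zmultiples_iff.mpr ⟨j, ?_⟩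
    rw [zsmul_eq_mul] at hj ⊢
    push_cast at hj ⊢
    field_simp
    linear_combination hj
  -- relindex aℤ T = b
  have hzaT : (zmultiples ((a:ℝ))).relIndex T = b := by
    have h2 : (a:ℝ) = (b:ℝ) * ((a:ℝ)/b) := by field_simp
    have h3 : (a:ℝ)/b ≠ 0 := div_ne_zero haR hbR
    rw [h2]
    exact keyB _ h3 b
  -- conclude Δ = T
  have hSD : S ≤ Δ := inf_le_right
  have hmul2 := relIndex_mul_relIndex S Δ T hSD hDT
  rw [hb, hSeq, hzaT] at hmul2
  have h4 : Δ.relIndex T = 1 := by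
    have : b * Δ.relIndex T = b * 1 := by rw [mul_one]; exact hmul2
    exact mul_left_cancel₀ hb0 this
  exact le_antisymm hDT (relIndex_eq_one.mp h4)

/-- For every `n`, the set of additive subgroups `Δ` of `ℝ` that are
commensurable with `ℤ = zmultiples 1` with commensurability index at most `n`
is finite. -/
theorem finite_commensurable_with_int (n : ℕ) :
    {Δ : AddSubgroup ℝ |
      addCommIndex (AddSubgroup.zmultiples (1 : ℝ)) Δ ≠ 0 ∧
      addCommIndex (AddSubgroup.zmultiples (1 : ℝ)) Δ ≤ n}.Finite := by
  apply Set.Finite.subset (((Set.finite_Icc 1 n).prod (Set.finite_Icc 1 n)).image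
    (fun p : ℕ × ℕ => zmultiples ((p.1 : ℝ) / p.2)))
  rintro Δ ⟨hne, hle⟩
  set a := (zmultiples (1:ℝ) ⊓ Δ).relIndex (zmultiples (1:ℝ)) with ha
  set b := (zmultiples (1:ℝ) ⊓ Δ).relIndex Δ with hb
  have hab : a * b ≠ 0 := hne
  have ha0 : a ≠ 0 := fun h => hab (by rw [h, zero_mul])
  have hb0 : b ≠ 0 := fun h => hab (by rw [h, mul_zero])
  have habn : a * b ≤ n := hle
  refine ⟨(a, b), ⟨⟨Nat.one_le_iff_ne_zero.mpr ha0, ?_⟩,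
    ⟨Nat.one_le_iff_ne_zero.mpr hb0, ?_⟩⟩, (keyC Δ ha.symm hb.symm ha0 hb0).symm⟩
  · calc a ≤ a * b := Nat.le_mul_of_pos_right a (Nat.pos_of_ne_zero hb0)
      _ ≤ n := habn
  · calc b ≤ a * b := Nat.le_mul_of_pos_left b (Nat.pos_of_ne_zero ha0)
      _ ≤ n := habn
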